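/- Suppose θ₁, θ₂, θ₃ ∈ ℝ and ω ∈ ℝ satisfy the equations of motion for a relative equilibrium on a rotating meridian, i.e. (ω²/2)·sin(2θ_k) = Σ_{i≠k} sin(θ_k−θ_i)/|sin(θ_k−θ_i)|³ for k = 1,2,3, with sin(θ_k−θ_i) ≠ 0 for all i ≠ k. If ω ≠ 0, then sin(2θ₁) + sin(2θ₂) + sin(2θ₃) = 0. -/
import Mathlib

open Real

lemma pair_cancel (a b : ℝ) :
    sin (b - a) / |sin (b - a)| ^ 3 = -(sin (a - b) / |sin (a - b)| ^ 3) := by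
  rw [show b - a = -(a - b) by ring, Real.sin_neg, abs_neg, neg_div]

/-- If θ₁, θ₂, θ₃ and ω satisfy the equations of motion for a relative
equilibrium on a rotating meridian (with all mutual sines nonzero) and ω ≠ 0,
then sin(2θ₁) + sin(2θ₂) + sin(2θ₃) = 0. -/
theorem stmt_0 (θ₁ θ₂ θ₃ ω : ℝ)
    (h12 : sin (θ₁ - θ₂) ≠ 0) (h13 : sin (θ₁ - θ₃) ≠ 0) (h23 : sin (θ₂ - θ₃) ≠ 0)
    (eom1 : ω ^ 2 / 2 * sin (2 * θ₁)
      = sin (θ₁ - θ₂) / |sin (θ₁ - θ₂)| ^ 3 + sin (θ₁ - θ₃) / |sin (θ₁ - θ₃)| ^ 3)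
    (eom2 : ω ^ 2 / 2 * sin (2 * θ₂)
      = sin (θ₂ - θ₁) / |sin (θ₂ - θ₁)| ^ 3 + sin (θ₂ - θ₃) / |sin (θ₂ - θ₃)| ^ 3)
    (eom3 : ω ^ 2 / 2 * sin (2 * θ₃)
      = sin (θ₃ - θ₁) / |sin (θ₃ - θ₁)| ^ 3 + sin (θ₃ - θ₂) / |sin (θ₃ - θ₂)| ^ 3)
    (hω : ω ≠ 0) :
    sin (2 * θ₁) + sin (2 * θ₂) + sin (2 * θ₃) = 0 := by
  have key : ω ^ 2 / 2 * (sin (2 * θ₁) + sin (2 * θ₂) + sin (2 * θ₃)) = 0 := by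
    rw [mul_add, mul_add, eom1, eom2, eom3,
      pair_cancel θ₁ θ₂, pair_cancel θ₁ θ₃, pair_cancel θ₂ θ₃]
    ring
  have hω2 : ω ^ 2 / 2 ≠ 0 := by positivity
  exact (mul_eq_zero.mp key).resolve_left hω2
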